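/- arXiv:2409.15887 — 2 statements merged into one kernel-verified Lean document; each statement's English description precedes it below -/
import Mathlib

section
/- Let X ∈ ℝ^{N×d} be a data matrix with rows x^1,…,x^N, and let G ∈ ℝ^{N×c} be a cluster indicator matrix (entries in {0,1}, each row summing to 1) such that every column sum p_jj = Σ_i g_ij is positive. Let P = diag(p_11,…,p_cc) and S = G P^{-1} Gᵀ with entries s_ij. Then the infimum over all centroid matrices U ∈ ℝ^{c×d} (rows u^1,…,u^c) of the K-means objective Σ_{i,j} g_ij ‖x^i − u^j‖₂² equals (1/2) Σ_{i=1}^{N} Σ_{j=1}^{N} s_ij ‖x^i − x^j‖₂². In particular, K-means can be expressed as manifold learning with similarity matrix S, without explicit centroids. -/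
open Matrix BigOperators

private lemma key_sum {n : ℕ} (a b : Fin n → ℝ) :
    ∑ i, ∑ j, a i * a j * (b i - b j) ^ 2
      = 2 * (∑ i, a i) * (∑ i, a i * b i ^ 2) - 2 * (∑ i, a i * b i) ^ 2 := by
  have h : ∀ i j : Fin n, a i * a j * (b i - b j) ^ 2
      = a i * b i ^ 2 * a j + a i * (a j * b j ^ 2) - 2 * (a i * b i) * (a j * b j) := by
    intro i j; ring
  simp_rw [h, Finset.sum_sub_distrib, Finset.sum_add_distrib, ← Finset.mul_sum,
    ← Finset.sum_mul, ← Finset.mul_sum]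
  ring

private lemma swap4 {N c d : ℕ} (F : Fin N → Fin N → Fin c → Fin d → ℝ) :
    ∑ i, ∑ j, ∑ l, ∑ k, F i j l k = ∑ l, ∑ k, ∑ i, ∑ j, F i j l k := by
  calc ∑ i, ∑ j, ∑ l, ∑ k, F i j l k
      = ∑ i, ∑ l, ∑ j, ∑ k, F i j l k := by congr 1; ext i; rw [Finset.sum_comm]
    _ = ∑ l, ∑ i, ∑ j, ∑ k, F i j l k := by rw [Finset.sum_comm]
    _ = ∑ l, ∑ i, ∑ k, ∑ j, F i j l k := by
        congr 1; ext l; congr 1; ext i; rw [Finset.sum_comm]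
    _ = ∑ l, ∑ k, ∑ i, ∑ j, F i j l k := by congr 1; ext l; rw [Finset.sum_comm]

/-- K-means without centroids: the infimum over centroid matrices `U` of the
K-means objective equals half the manifold-learning objective with similarity
matrix `S = G P⁻¹ Gᵀ`. -/
theorem kmeans_eq_manifold_learning {N c d : ℕ}
    (X : Matrix (Fin N) (Fin d) ℝ) (G : Matrix (Fin N) (Fin c) ℝ)
    (hG01 : ∀ i j, G i j = 0 ∨ G i j = 1)
    (hrow : ∀ i, ∑ j, G i j = 1)
    (hcol : ∀ j, 0 < ∑ i, G i j)
    (P : Matrix (Fin c) (Fin c) ℝ)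
    (hP : P = Matrix.diagonal (fun j => ∑ i, G i j))
    (S : Matrix (Fin N) (Fin N) ℝ)
    (hS : S = G * P⁻¹ * Gᵀ) :
    (⨅ U : Matrix (Fin c) (Fin d) ℝ,
        ∑ i, ∑ j, G i j * ∑ k, (X i k - U j k) ^ 2)
      = (1 / 2) * ∑ i, ∑ j, S i j * ∑ k, (X i k - X j k) ^ 2 := by
  set p : Fin c → ℝ := fun j => ∑ i, G i j with hp
  have hpne : ∀ j, p j ≠ 0 := fun j => (hcol j).ne'
  set f : Matrix (Fin c) (Fin d) ℝ → ℝ :=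
    fun U => ∑ i, ∑ j, G i j * ∑ k, (X i k - U j k) ^ 2 with hfdef
  set Us : Matrix (Fin c) (Fin d) ℝ :=
    (fun j k => (∑ i, G i j * X i k) / p j : Matrix (Fin c) (Fin d) ℝ) with hUs
  have hfswap : ∀ U, f U = ∑ j, ∑ k, ∑ i, G i j * (X i k - U j k) ^ 2 := by
    intro U
    simp only [hfdef, Finset.mul_sum]
    rw [Finset.sum_comm]
    congr 1; ext j
    rw [Finset.sum_comm]
  have hm : ∀ j k, ∑ i, G i j * X i k = p j * Us j k := by
    intro j k
    show _ = p j * ((∑ i, G i j * X i k) / p j)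
    rw [mul_comm, div_mul_cancel₀ _ (hpne j)]
  have expand : ∀ (j : Fin c) (k : Fin d) (u : ℝ),
      ∑ i, G i j * (X i k - u) ^ 2
        = ∑ i, G i j * X i k ^ 2 - 2 * u * (p j * Us j k) + u ^ 2 * p j := by
    intro j k u
    have h : ∀ i, G i j * (X i k - u) ^ 2
        = G i j * X i k ^ 2 - 2 * u * (G i j * X i k) + u ^ 2 * G i j := by
      intro i; ring
    simp_rw [h, Finset.sum_add_distrib, Finset.sum_sub_distrib, ← Finset.mul_sum, hm]
    rfl
  have hlb : ∀ U, f Us ≤ f U := by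
    intro U
    rw [hfswap, hfswap]
    refine Finset.sum_le_sum fun j _ => Finset.sum_le_sum fun k _ => ?_
    rw [expand j k (U j k), expand j k (Us j k)]
    nlinarith [sq_nonneg (Us j k - U j k), (hcol j).le, sq_nonneg (U j k)]
  have hinf : (⨅ U, f U) = f Us := by
    refine le_antisymm (ciInf_le ⟨f Us, fun x hx => ?_⟩ Us) (le_ciInf hlb)
    obtain ⟨U, rfl⟩ := hx
    exact hlb U
  rw [hinf]
  have hfUs : f Us = ∑ j, ∑ k, (∑ i, G i j * X i k ^ 2 - (∑ i, G i j * X i k) ^ 2 / p j) := by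
    rw [hfswap]
    congr 1; ext j; congr 1; ext k
    rw [expand j k (Us j k), hm]
    have := hpne j
    field_simp [hUs]
    ring
  have hPinv : P⁻¹ = Matrix.diagonal (fun j => (p j)⁻¹) := by
    apply Matrix.inv_eq_right_inv
    rw [hP, Matrix.diagonal_mul_diagonal]
    have h1 : (fun i => p i * (p i)⁻¹) = fun _ : Fin c => (1:ℝ) :=
      funext fun i => mul_inv_cancel₀ (hpne i)
    rw [h1, Matrix.diagonal_one]
  have hSentry : ∀ i j, S i j = ∑ l, G i l * (p l)⁻¹ * G j l := by
    intro i j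
    rw [hS, hPinv, Matrix.mul_apply]
    simp only [Matrix.mul_diagonal, Matrix.transpose_apply]
  have hrhs : (1 / 2) * ∑ i, ∑ j, S i j * ∑ k, (X i k - X j k) ^ 2
      = ∑ l, ∑ k, (∑ i, G i l * X i k ^ 2 - (∑ i, G i l * X i k) ^ 2 / p l) := by
    simp_rw [hSentry, Finset.sum_mul, Finset.mul_sum]
    rw [swap4]
    congr 1; ext l; congr 1; ext k
    have h2 : ∀ i j : Fin N,
        1 / 2 * (G i l * (p l)⁻¹ * G j l * (X i k - X j k) ^ 2)
          = 1 / 2 * (p l)⁻¹ * (G i l * G j l * (X i k - X j k) ^ 2) := by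
      intro i j; ring
    simp_rw [h2, ← Finset.mul_sum]
    rw [key_sum (fun i => G i l) (fun i => X i k)]
    have hpl : ∑ i, G i l = p l := rfl
    simp only [hpl]
    have := hpne l
    field_simp
  rw [hrhs, hfUs]
end

section
/- Let G ∈ ℝ^{N×c} satisfy g_ij ≥ 0 for all i, j and Σ_{j=1}^c g_ij = 1 for every row i. Then Σ_{j=1}^c ‖g_j‖₂ = √(cN) holds if and only if every entry of G lies in {0,1} (i.e., G is a discrete cluster indicator matrix) and all column sums of G are equal (each equal to N/c). Hence maximizing the ℓ_{2,1}-norm ‖Gᵀ‖_{2,1} over this constraint set forces G to be a discrete label matrix with a balanced class distribution. -/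
open Matrix BigOperators

/-- Equality case of the `ℓ_{2,1}`-norm bound: for `G ∈ ℝ^{N×c}` with
nonnegative entries whose rows each sum to 1, `∑ⱼ ‖gⱼ‖₂ = √(cN)` holds iff
every entry of `G` lies in `{0,1}` (so `G` is a discrete indicator matrix)
and all column sums of `G` are equal to `N/c` (balanced class distribution). -/
theorem l21_norm_max_iff_balanced_indicator {N c : ℕ}
    (G : Matrix (Fin N) (Fin c) ℝ)
    (hGnn : ∀ i j, 0 ≤ G i j)
    (hrow : ∀ i, ∑ j, G i j = 1) :
    (∑ j, Real.sqrt (∑ i, (G i j) ^ 2) = Real.sqrt ((c : ℝ) * N))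
      ↔ ((∀ i j, G i j = 0 ∨ G i j = 1) ∧ ∀ j, ∑ i, G i j = (N : ℝ) / c) := by
  have hle1 : ∀ i j, G i j ≤ 1 := by
    intro i j
    calc G i j ≤ ∑ j', G i j' :=
          Finset.single_le_sum (fun k _ => hGnn i k) (Finset.mem_univ j)
      _ = 1 := hrow i
  have hsnn : ∀ j, (0:ℝ) ≤ ∑ i, G i j := fun j => Finset.sum_nonneg fun i _ => hGnn i j
  have hqnn : ∀ j, (0:ℝ) ≤ ∑ i, (G i j)^2 := fun j => Finset.sum_nonneg fun i _ => sq_nonneg _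
  have hq_le_s : ∀ j, ∑ i, (G i j)^2 ≤ ∑ i, G i j := by
    intro j
    refine Finset.sum_le_sum fun i _ => ?_
    nlinarith [hGnn i j, hle1 i j]
  have hsum_s : ∑ j, ∑ i, G i j = (N:ℝ) := by
    rw [Finset.sum_comm]; simp [hrow]
  constructor
  · intro h
    rcases Nat.eq_zero_or_pos c with hc | hc
    · subst hc
      exact ⟨fun i j => absurd j.2 (by simp), fun j => absurd j.2 (by simp)⟩
    have hcpos : (0:ℝ) < c := by exact_mod_cast hc
    set x : Fin c → ℝ := fun j => Real.sqrt (∑ i, G i j) with hxdef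
    have hx_nn : ∀ j, 0 ≤ x j := fun j => Real.sqrt_nonneg _
    have hx_sq : ∀ j, x j ^ 2 = ∑ i, G i j := fun j => Real.sq_sqrt (hsnn j)
    have hA : ∀ j, Real.sqrt (∑ i, (G i j)^2) ≤ x j :=
      fun j => Real.sqrt_le_sqrt (hq_le_s j)
    have hAsum : ∑ j, Real.sqrt (∑ i, (G i j)^2) ≤ ∑ j, x j :=
      Finset.sum_le_sum fun j _ => hA j
    have hx2sum : ∑ j, x j ^ 2 = (N:ℝ) := by simp only [hx_sq]; exact hsum_s
    have hB : (∑ j, x j) ^ 2 ≤ (c:ℝ) * N := by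
      calc (∑ j, x j) ^ 2 ≤ ((Finset.univ : Finset (Fin c)).card : ℝ) * ∑ j, x j ^ 2 :=
            sq_sum_le_card_mul_sum_sq
        _ = (c:ℝ) * N := by rw [hx2sum]; simp
    have hxsum_nn : 0 ≤ ∑ j, x j := Finset.sum_nonneg fun j _ => hx_nn j
    have hB' : ∑ j, x j ≤ Real.sqrt ((c:ℝ) * N) :=
      (Real.le_sqrt hxsum_nn (by positivity)).mpr hB
    have eq1 : ∑ j, Real.sqrt (∑ i, (G i j)^2) = ∑ j, x j :=
      le_antisymm hAsum (by rw [h]; exact hB')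
    have eq2 : ∑ j, x j = Real.sqrt ((c:ℝ) * N) := le_antisymm hB' (by rw [← h]; exact hAsum)
    -- termwise equality in step A
    have hterm : ∀ j ∈ Finset.univ, Real.sqrt (∑ i, (G i j)^2) = x j :=
      (Finset.sum_eq_sum_iff_of_le fun j _ => hA j).mp eq1
    have hqs : ∀ j, ∑ i, (G i j)^2 = ∑ i, G i j := by
      intro j
      have := hterm j (Finset.mem_univ j)
      have h2 := congrArg (fun t => t ^ 2) this
      simpa [Real.sq_sqrt (hqnn j), hx_sq j] using h2
    have h01 : ∀ i j, G i j = 0 ∨ G i j = 1 := by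
      intro i j
      have hz : ∑ i', (G i' j - (G i' j)^2) = 0 := by
        rw [Finset.sum_sub_distrib, hqs j, sub_self]
      have := (Finset.sum_eq_zero_iff_of_nonneg fun i' _ => by
        nlinarith [hGnn i' j, hle1 i' j]).mp hz i (Finset.mem_univ i)
      rcases mul_eq_zero.mp (show G i j * (1 - G i j) = 0 by nlinarith) with h' | h'
      · exact Or.inl h'
      · exact Or.inr (by linarith)
    refine ⟨h01, fun j => ?_⟩
    -- equality in Cauchy-Schwarz: all x j equal
    have hsq2 : (∑ j, x j)^2 = (c:ℝ) * N := by
      rw [eq2, Real.sq_sqrt (by positivity)]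
    set m : ℝ := (∑ j, x j) / c with hm
    have hvar : ∑ j, (x j - m)^2 = 0 := by
      have expand : ∑ j, (x j - m)^2
          = ∑ j, x j ^ 2 - 2 * m * ∑ j, x j + (c:ℝ) * m^2 := by
        have h2m : ∑ j, 2 * x j * m = 2 * m * ∑ j, x j := by
          rw [Finset.mul_sum]; exact Finset.sum_congr rfl fun j _ => by ring
        simp only [sub_sq]
        rw [Finset.sum_add_distrib, Finset.sum_sub_distrib, h2m, Finset.sum_const,
          Finset.card_univ, Fintype.card_fin, nsmul_eq_mul]
      rw [expand, hx2sum, hm]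
      field_simp
      nlinarith [hsq2]
    have hxm : x j = m :=
      sub_eq_zero.mp (pow_eq_zero_iff (n := 2) (by norm_num) |>.mp
        ((Finset.sum_eq_zero_iff_of_nonneg fun j' _ => sq_nonneg _).mp hvar j
          (Finset.mem_univ j)))
    have : ∑ i, G i j = m ^ 2 := by rw [← hx_sq j, hxm]
    rw [this, hm, div_pow]
    rw [hsq2]
    field_simp
  · rintro ⟨h01, hbal⟩
    have hq_eq : ∀ j, ∑ i, (G i j)^2 = ∑ i, G i j := by
      intro j
      refine Finset.sum_congr rfl fun i _ => ?_
      rcases h01 i j with h' | h' <;> rw [h'] <;> norm_num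
    calc ∑ j, Real.sqrt (∑ i, (G i j)^2) = ∑ j, Real.sqrt ((N:ℝ)/c) := by
          refine Finset.sum_congr rfl fun j _ => ?_
          rw [hq_eq j, hbal j]
      _ = (c:ℝ) * Real.sqrt ((N:ℝ)/c) := by simp [Finset.card_univ, mul_comm]
      _ = Real.sqrt ((c:ℝ)*N) := by
          rcases Nat.eq_zero_or_pos c with hc | hc
          · subst hc; simp
          · have hcpos : (0:ℝ) < c := by exact_mod_cast hc
            rw [show (c:ℝ) * Real.sqrt ((N:ℝ)/c)
                = Real.sqrt ((c:ℝ)^2) * Real.sqrt ((N:ℝ)/c) by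
                  rw [Real.sqrt_sq hcpos.le],
              ← Real.sqrt_mul (by positivity)]
            congr 1
            field_simp
end
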